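/- arXiv:math/0107064 — 2 statements merged into one kernel-verified Lean document; each statement's English description precedes it below -/
import Mathlib

section
/- (Exchange relation.) In the depth-2 Jones tower setup, let b ∈ B and let (b₁⁽ⁱ⁾, b₂⁽ⁱ⁾)_{i=1,…,m} be any finite family of pairs of elements of B satisfying ∑ᵢ F(a e₂ e₁ b₁⁽ⁱ⁾) F(a' e₂ e₁ b₂⁽ⁱ⁾) = λ² F(a a' e₂ e₁ b) for all a, a' ∈ A (i.e., ∑ᵢ b₁⁽ⁱ⁾ ⊗ b₂⁽ⁱ⁾ represents the comultiplication Δ(b) determined by the non-degenerate pairing ⟨a,b⟩ = λ⁻²F(a e₂ e₁ b)). Then for every y ∈ M₁: y b = λ⁻¹ ∑ᵢ b₂⁽ⁱ⁾ E_{M₁}(e₂ y b₁⁽ⁱ⁾). -/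
open scoped TensorProduct

/-- The depth-2 Jones tower setup: a tower `N ⊆ M ⊆ M₁ ⊆ R` (with `R` playing the
role of `M₂`) of unital `k`-algebras, with conditional expectations, Jones idempotents,
braid-like relations and depth-2 orthogonal dual bases, as in the paper. -/
structure JonesTower (k : Type*) [Field k] (R : Type*) [Ring R] [Algebra k R] where
  N : Subalgebra k R
  M : Subalgebra k R
  M₁ : Subalgebra k R
  hNM : N ≤ M
  hMM₁ : M ≤ M₁
  lam : k
  hlam : lam ≠ 0
  E : R →ₗ[k] R
  EM : R →ₗ[k] R
  EM1 : R →ₗ[k] R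
  hE_mem : ∀ m ∈ M, E m ∈ N
  hEM_mem : ∀ x ∈ M₁, EM x ∈ M
  hEM1_mem : ∀ x : R, EM1 x ∈ M₁
  hE_one : E 1 = 1
  hEM_one : EM 1 = 1
  hEM1_one : EM1 1 = 1
  hE_bimod : ∀ n ∈ N, ∀ n' ∈ N, ∀ m ∈ M, E (n * m * n') = n * E m * n'
  hEM_bimod : ∀ m ∈ M, ∀ m' ∈ M, ∀ x ∈ M₁, EM (m * x * m') = m * EM x * m'
  hEM1_bimod : ∀ w ∈ M₁, ∀ w' ∈ M₁, ∀ x : R, EM1 (w * x * w') = w * EM1 x * w'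
  n₀ : ℕ
  xb : Fin n₀ → R
  yb : Fin n₀ → R
  hxb : ∀ i, xb i ∈ M
  hyb : ∀ i, yb i ∈ M
  hE_dual₁ : ∀ m ∈ M, ∑ i, E (m * xb i) * yb i = m
  hE_dual₂ : ∀ m ∈ M, ∑ i, xb i * E (yb i * m) = m
  hE_index : ∑ i, xb i * yb i = lam⁻¹ • (1 : R)
  hCMN : ∀ c ∈ M, (∀ n ∈ N, c * n = n * c) → ∃ μ : k, c = μ • (1 : R)
  hCM₁M : ∀ c ∈ M₁, (∀ m ∈ M, c * m = m * c) → ∃ μ : k, c = μ • (1 : R)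
  hCM₂M₁ : ∀ c : R, (∀ w ∈ M₁, c * w = w * c) → ∃ μ : k, c = μ • (1 : R)
  e₁ : R
  e₂ : R
  he₁ : e₁ ∈ M₁
  he₁N : ∀ n ∈ N, e₁ * n = n * e₁
  he₂M : ∀ m ∈ M, e₂ * m = m * e₂
  he₁me₁ : ∀ m ∈ M, e₁ * m * e₁ = E m * e₁
  he₂we₂ : ∀ w ∈ M₁, e₂ * w * e₂ = EM w * e₂
  hEMe₁ : EM e₁ = lam • (1 : R)
  hEM1e₂ : EM1 e₂ = lam • (1 : R)
  hspanM₁ : Subalgebra.toSubmodule M₁ =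
    Submodule.span k {x : R | ∃ m ∈ M, ∃ m' ∈ M, x = m * e₁ * m'}
  hspanM₂ : (⊤ : Submodule k R) =
    Submodule.span k {x : R | ∃ w ∈ M₁, ∃ w' ∈ M₁, x = w * e₂ * w'}
  hbraid₁ : e₁ * e₂ * e₁ = lam • e₁
  hbraid₂ : e₂ * e₁ * e₂ = lam • e₂
  r : ℕ
  zb : Fin r → R
  wb : Fin r → R
  hzbM₁ : ∀ i, zb i ∈ M₁
  hwbM₁ : ∀ i, wb i ∈ M₁
  hzbN : ∀ i, ∀ n ∈ N, zb i * n = n * zb i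
  hwbN : ∀ i, ∀ n ∈ N, wb i * n = n * wb i
  hzw_orth : ∀ i j, EM (wb i * zb j) = if i = j then (1 : R) else 0
  hzw_dual₁ : ∀ x ∈ M₁, ∑ i, EM (x * zb i) * wb i = x
  hzw_dual₂ : ∀ x ∈ M₁, ∑ i, zb i * EM (wb i * x) = x
  hzw_index : ∑ i, zb i * wb i = lam⁻¹ • (1 : R)
  s : ℕ
  ub : Fin s → R
  vb : Fin s → R
  hubM : ∀ i, ∀ m ∈ M, ub i * m = m * ub i
  hvbM : ∀ i, ∀ m ∈ M, vb i * m = m * vb i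
  huv_orth : ∀ i j, EM1 (vb i * ub j) = if i = j then (1 : R) else 0
  huv_dual₁ : ∀ x : R, ∑ i, EM1 (x * ub i) * vb i = x
  huv_dual₂ : ∀ x : R, ∑ i, ub i * EM1 (vb i * x) = x
  huv_index : ∑ i, ub i * vb i = lam⁻¹ • (1 : R)
  F : R →ₗ[k] k
  hF : ∀ c : R, (∀ n ∈ N, c * n = n * c) → algebraMap k R (F c) = EM (EM1 c)

variable {k : Type*} [Field k] {R : Type*} [Ring R] [Algebra k R]

/-- The second centralizer `A = C_{M₁}(N)`. -/
def JonesTower.A (T : JonesTower k R) : Subalgebra k R :=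
  T.M₁ ⊓ Subalgebra.centralizer k (T.N : Set R)

/-- The second centralizer `B = C_{M₂}(M)`. -/
def JonesTower.B (T : JonesTower k R) : Subalgebra k R :=
  Subalgebra.centralizer k (T.M : Set R)

/-- The big centralizer `C = C_{M₂}(N)`. -/
def JonesTower.C (T : JonesTower k R) : Subalgebra k R :=
  Subalgebra.centralizer k (T.N : Set R)

namespace JonesTower

variable {k : Type*} [Field k] {R : Type*} [Ring R] [Algebra k R] (T : JonesTower k R)

lemma e₂N : ∀ n ∈ T.N, T.e₂ * n = n * T.e₂ := fun n hn => T.he₂M n (T.hNM hn)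

lemma EM1_left : ∀ w ∈ T.M₁, ∀ x : R, T.EM1 (w * x) = w * T.EM1 x := by
  intro w hw x
  have := T.hEM1_bimod w hw 1 (one_mem _) x
  simpa using this

lemma EM1_right : ∀ x : R, ∀ w ∈ T.M₁, T.EM1 (x * w) = T.EM1 x * w := by
  intro x w hw
  have := T.hEM1_bimod 1 (one_mem _) w hw x
  simpa using this

lemma EM_left : ∀ m ∈ T.M, ∀ x ∈ T.M₁, T.EM (m * x) = m * T.EM x := by
  intro m hm x hx
  have := T.hEM_bimod m hm 1 (one_mem _) x hx
  simpa using this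

lemma EM_right : ∀ x ∈ T.M₁, ∀ m ∈ T.M, T.EM (x * m) = T.EM x * m := by
  intro x hx m hm
  have := T.hEM_bimod 1 (one_mem _) m hm x hx
  simpa using this

lemma Bcomm {c : R} (hc : c ∈ T.B) : ∀ m ∈ T.M, c * m = m * c := by
  intro m hm
  exact ((Subalgebra.mem_centralizer_iff k).mp hc m hm).symm

lemma BNcomm {c : R} (hc : c ∈ T.B) : ∀ n ∈ T.N, c * n = n * c := fun n hn =>
  T.Bcomm hc n (T.hNM hn)

/-- right pull-down for `e₂`. -/
lemma pull : ∀ y : R, T.e₂ * y = T.lam⁻¹ • (T.e₂ * T.EM1 (T.e₂ * y)) := by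
  have key : Set.EqOn (⇑(LinearMap.mulLeft k T.e₂))
      (⇑(T.lam⁻¹ • ((LinearMap.mulLeft k T.e₂) ∘ₗ T.EM1 ∘ₗ (LinearMap.mulLeft k T.e₂))))
      {x : R | ∃ w ∈ T.M₁, ∃ w' ∈ T.M₁, x = w * T.e₂ * w'} := by
    rintro x ⟨w, hw, w', hw', rfl⟩
    simp only [LinearMap.smul_apply, LinearMap.coe_comp, Function.comp_apply,
      LinearMap.mulLeft_apply]
    have h1 : T.e₂ * (w * T.e₂ * w') = T.EM w * T.e₂ * w' := by
      rw [show T.e₂ * (w * T.e₂ * w') = (T.e₂ * w * T.e₂) * w' by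
        rw [mul_assoc, mul_assoc, mul_assoc], T.he₂we₂ w hw]
    have h2 : T.EM1 (T.e₂ * (w * T.e₂ * w')) = T.lam • (T.EM w * w') := by
      rw [h1]
      have hm : T.EM w ∈ T.M₁ := T.hMM₁ (T.hEM_mem w hw)
      rw [T.hEM1_bimod (T.EM w) hm w' hw' T.e₂, T.hEM1e₂]
      rw [mul_smul_comm, smul_mul_assoc, mul_one]
    rw [h2, h1, mul_smul_comm, ← smul_assoc]
    rw [smul_eq_mul, inv_mul_cancel₀ T.hlam, one_smul]
    rw [show T.e₂ * (T.EM w * w') = (T.e₂ * T.EM w) * w' by rw [mul_assoc],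
      T.he₂M _ (T.hEM_mem w hw)]
  intro y
  have hy : y ∈ Submodule.span k {x : R | ∃ w ∈ T.M₁, ∃ w' ∈ T.M₁, x = w * T.e₂ * w'} := by
    rw [← T.hspanM₂]; exact Submodule.mem_top
  have := LinearMap.eqOn_span key hy
  simpa using this

lemma L1 : ∀ x y : R, T.EM1 (x * T.e₂ * y) =
    T.lam⁻¹ • (T.EM1 (x * T.e₂) * T.EM1 (T.e₂ * y)) := by
  intro x y
  conv_lhs => rw [mul_assoc, T.pull y, mul_smul_comm, map_smul, ← mul_assoc,
    T.EM1_right (x * T.e₂) _ (T.hEM1_mem _)]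

end JonesTower
namespace JonesTower

variable {k : Type*} [Field k] {R : Type*} [Ring R] [Algebra k R] (T : JonesTower k R)

/-- The averaging `∑ x_k a y_k` of an `N`-central element is `M`-central. -/
lemma central_sum (a : R) (ha : ∀ n ∈ T.N, a * n = n * a) :
    ∀ m ∈ T.M, m * (∑ j, T.xb j * a * T.yb j) = (∑ j, T.xb j * a * T.yb j) * m := by
  intro m hm
  have step1 : ∀ j, m * (T.xb j * a * T.yb j)
      = ∑ l, T.xb l * a * (T.E (T.yb l * (m * T.xb j)) * T.yb j) := by
    intro j
    have hmx : m * T.xb j ∈ T.M := mul_mem hm (T.hxb j)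
    calc m * (T.xb j * a * T.yb j) = (m * T.xb j) * a * T.yb j := by
          rw [← mul_assoc, ← mul_assoc]
      _ = (∑ l, T.xb l * T.E (T.yb l * (m * T.xb j))) * a * T.yb j := by
          rw [T.hE_dual₂ _ hmx]
      _ = ∑ l, T.xb l * a * (T.E (T.yb l * (m * T.xb j)) * T.yb j) := by
          rw [Finset.sum_mul, Finset.sum_mul]
          refine Finset.sum_congr rfl fun l _ => ?_
          have hE : T.E (T.yb l * (m * T.xb j)) ∈ T.N :=
            T.hE_mem _ (mul_mem (T.hyb l) hmx)
          rw [mul_assoc (T.xb l), ← ha _ hE]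
          simp only [mul_assoc]
  calc m * (∑ j, T.xb j * a * T.yb j)
      = ∑ j, ∑ l, T.xb l * a * (T.E (T.yb l * (m * T.xb j)) * T.yb j) := by
        rw [Finset.mul_sum]; exact Finset.sum_congr rfl fun j _ => step1 j
    _ = ∑ l, T.xb l * a * (∑ j, T.E ((T.yb l * m) * T.xb j) * T.yb j) := by
        rw [Finset.sum_comm]
        refine Finset.sum_congr rfl fun l _ => ?_
        rw [Finset.mul_sum]
        exact Finset.sum_congr rfl fun j _ => by simp only [mul_assoc]
    _ = ∑ l, T.xb l * a * (T.yb l * m) := by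
        refine Finset.sum_congr rfl fun l _ => ?_
        rw [T.hE_dual₁ _ (mul_mem (T.hyb l) hm)]
    _ = (∑ j, T.xb j * a * T.yb j) * m := by
        rw [Finset.sum_mul]
        exact Finset.sum_congr rfl fun l _ => by rw [mul_assoc, mul_assoc, mul_assoc]

lemma one_sum : ∑ j, T.xb j * T.e₁ * T.yb j = 1 := by
  set X := ∑ j, T.xb j * T.e₁ * T.yb j with hX
  have hXM₁ : X ∈ T.M₁ :=
    Subalgebra.sum_mem _ fun j _ => mul_mem (mul_mem (T.hMM₁ (T.hxb j)) T.he₁)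
      (T.hMM₁ (T.hyb j))
  obtain ⟨μ, hμ⟩ := T.hCM₁M X hXM₁ fun m hm => (T.central_sum T.e₁ T.he₁N m hm).symm
  have hEMX : T.EM X = T.lam • (T.lam⁻¹ • (1 : R)) := by
    rw [hX, map_sum]
    have : ∀ j, T.EM (T.xb j * T.e₁ * T.yb j) = T.lam • (T.xb j * T.yb j) := by
      intro j
      rw [T.hEM_bimod _ (T.hxb j) _ (T.hyb j) _ T.he₁, T.hEMe₁]
      rw [mul_smul_comm, smul_mul_assoc, mul_one]
    rw [Finset.sum_congr rfl fun j _ => this j, ← Finset.smul_sum, T.hE_index]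
  have h1 : T.EM X = 1 := by
    rw [hEMX, ← smul_assoc, smul_eq_mul, mul_inv_cancel₀ T.hlam, one_smul]
  have h2 : T.EM X = X := by
    rw [hμ, map_smul, T.hEM_one]
  rw [← h2, h1]

/-- `EM` of an `N`-central element of `M₁` is a scalar. -/
lemma EM_scalar (a : R) (haM : a ∈ T.M₁) (ha : ∀ n ∈ T.N, a * n = n * a) :
    ∃ η : k, T.EM a = η • (1 : R) := by
  refine T.hCMN (T.EM a) (T.hEM_mem a haM) fun n hn => ?_
  have h1 : T.EM a * n = T.EM (a * n) := (T.EM_right a haM n (T.hNM hn)).symm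
  have h2 : T.EM (n * a) = n * T.EM a := T.EM_left n (T.hNM hn) a haM
  rw [h1, ha n hn, h2]

/-- `∑ x_k a y_k = λ⁻¹ • EM a` for `a ∈ A`. -/
lemma scalarA (a : R) (haM : a ∈ T.M₁) (ha : ∀ n ∈ T.N, a * n = n * a) :
    ∑ j, T.xb j * a * T.yb j = T.lam⁻¹ • T.EM a := by
  set Y := ∑ j, T.xb j * a * T.yb j with hY
  have hYM₁ : Y ∈ T.M₁ :=
    Subalgebra.sum_mem _ fun j _ => mul_mem (mul_mem (T.hMM₁ (T.hxb j)) haM)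
      (T.hMM₁ (T.hyb j))
  obtain ⟨μ, hμ⟩ := T.hCM₁M Y hYM₁ fun m hm => (T.central_sum a ha m hm).symm
  obtain ⟨η, hη⟩ := T.EM_scalar a haM ha
  have hEMY : T.EM Y = η • (T.lam⁻¹ • (1 : R)) := by
    rw [hY, map_sum]
    have : ∀ j, T.EM (T.xb j * a * T.yb j) = η • (T.xb j * T.yb j) := by
      intro j
      rw [T.hEM_bimod _ (T.hxb j) _ (T.hyb j) _ haM, hη]
      rw [mul_smul_comm, mul_one, smul_mul_assoc]
    rw [Finset.sum_congr rfl fun j _ => this j, ← Finset.smul_sum, T.hE_index]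
  have h2 : T.EM Y = Y := by rw [hμ, map_smul, T.hEM_one]
  rw [← h2, hEMY, hη, smul_comm]

/-- `EM1` of an element of `B` is a scalar. -/
lemma EM1_scalar {c : R} (hc : c ∈ T.B) : ∃ μ : k, T.EM1 c = μ • (1 : R) := by
  refine T.hCM₁M (T.EM1 c) (T.hEM1_mem c) fun m hm => ?_
  have hmM₁ := T.hMM₁ hm
  have h1 : T.EM1 c * m = T.EM1 (c * m) := (T.EM1_right c m hmM₁).symm
  have h2 : T.EM1 (m * c) = m * T.EM1 c := T.EM1_left m hmM₁ c
  rw [h1, T.Bcomm hc m hm, h2]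

/-- Key trace-like lemma: `EM (EM1 (v e₁ c)) = λ • EM1 (v c)` for `v, c ∈ B`. -/
lemma L2 {v c : R} (hv : v ∈ T.B) (hc : c ∈ T.B) :
    T.EM (T.EM1 (v * T.e₁ * c)) = T.lam • T.EM1 (v * c) := by
  set t := T.EM1 (v * T.e₁ * c) with ht
  have htN : ∀ n ∈ T.N, t * n = n * t := by
    intro n hn
    have hnM₁ : n ∈ T.M₁ := T.hMM₁ (T.hNM hn)
    have hcomm : n * (v * T.e₁ * c) = (v * T.e₁ * c) * n := by
      rw [show n * (v * T.e₁ * c) = (n * v) * T.e₁ * c by rw [mul_assoc, ← mul_assoc,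
          ← mul_assoc],
        ← T.BNcomm hv n hn, mul_assoc v n, ← T.he₁N n hn, ← mul_assoc,
        mul_assoc _ n c, ← T.BNcomm hc n hn, ← mul_assoc]
    rw [ht, ← T.EM1_right _ n hnM₁, ← T.EM1_left n hnM₁, hcomm]
  have hsum : ∑ j, T.xb j * t * T.yb j = T.EM1 (v * c) := by
    have : ∀ j, T.xb j * t * T.yb j = T.EM1 (v * (T.xb j * T.e₁ * T.yb j) * c) := by
      intro j
      rw [ht, ← T.EM1_left _ (T.hMM₁ (T.hxb j)), ← T.EM1_right _ _ (T.hMM₁ (T.hyb j))]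
      congr 1
      simp only [mul_assoc]
      rw [T.Bcomm hc _ (T.hyb j), ← mul_assoc, ← T.Bcomm hv _ (T.hxb j), mul_assoc]
    rw [Finset.sum_congr rfl fun j _ => this j, ← map_sum]
    congr 1
    calc ∑ j, v * (T.xb j * T.e₁ * T.yb j) * c
        = v * (∑ j, T.xb j * T.e₁ * T.yb j) * c := by
          rw [Finset.mul_sum, Finset.sum_mul]
      _ = v * c := by rw [T.one_sum, mul_one]
  have := T.scalarA t (T.hEM1_mem _) htN
  rw [hsum] at this
  rw [this, ← smul_assoc, smul_eq_mul, mul_inv_cancel₀ T.hlam, one_smul]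

end JonesTower
namespace JonesTower

variable {k : Type*} [Field k] {R : Type*} [Ring R] [Algebra k R] (T : JonesTower k R)

lemma NC_mul {x y : R} (hx : ∀ n ∈ T.N, x * n = n * x) (hy : ∀ n ∈ T.N, y * n = n * y) :
    ∀ n ∈ T.N, (x * y) * n = n * (x * y) := by
  intro n hn
  rw [mul_assoc, hy n hn, ← mul_assoc, hx n hn, mul_assoc]

lemma NC_smul {x : R} (a : k) (hx : ∀ n ∈ T.N, x * n = n * x) :
    ∀ n ∈ T.N, (a • x) * n = n * (a • x) := by
  intro n hn
  rw [smul_mul_assoc, hx n hn, mul_smul_comm]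

lemma NC_e₂ : ∀ n ∈ T.N, T.e₂ * n = n * T.e₂ := T.e₂N

lemma EM1_NC {x : R} (hx : ∀ n ∈ T.N, x * n = n * x) :
    ∀ n ∈ T.N, T.EM1 x * n = n * T.EM1 x := by
  intro n hn
  have hnM₁ : n ∈ T.M₁ := T.hMM₁ (T.hNM hn)
  rw [← T.EM1_right x n hnM₁, hx n hn, T.EM1_left n hnM₁]

lemma mem_A {x : R} (h1 : x ∈ T.M₁) (h2 : ∀ n ∈ T.N, x * n = n * x) : x ∈ T.A :=
  Algebra.mem_inf.mpr ⟨h1, (Subalgebra.mem_centralizer_iff k).mpr fun g hg => (h2 g hg).symm⟩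

lemma mem_B_of_comm {x : R} (h : ∀ m ∈ T.M, x * m = m * x) : x ∈ T.B :=
  (Subalgebra.mem_centralizer_iff k).mpr fun g hg => (h g hg).symm

/-- Key product identity from `L1` and the braid relation. -/
lemma L1' (v c : R) : T.EM1 (v * T.e₁ * T.e₂) * T.EM1 (T.e₂ * T.e₁ * c) =
    (T.lam ^ 2) • T.EM1 (v * T.e₁ * c) := by
  have h1 := T.L1 (v * T.e₁) (T.e₁ * c)
  have h2 : v * T.e₁ * T.e₂ * (T.e₁ * c) = T.lam • (v * T.e₁ * c) := by
    have : v * T.e₁ * T.e₂ * (T.e₁ * c) = v * (T.e₁ * T.e₂ * T.e₁) * c := by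
      simp only [mul_assoc]
    rw [this, T.hbraid₁, mul_smul_comm, smul_mul_assoc]
  have h3 : T.e₂ * (T.e₁ * c) = T.e₂ * T.e₁ * c := by rw [mul_assoc]
  rw [h2, h3, map_smul] at h1
  have h4 : T.EM1 (v * T.e₁ * T.e₂) * T.EM1 (T.e₂ * T.e₁ * c)
      = T.lam • (T.lam • T.EM1 (v * T.e₁ * c)) := by
    rw [h1, ← smul_assoc, smul_eq_mul, mul_inv_cancel₀ T.hlam, one_smul]
  rw [h4, ← smul_assoc, smul_eq_mul, ← pow_two]

/-- The element `a_v := λ⁻³ • E_{M₁}(v e₁ e₂)` implements the functional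
`c ↦ E_{M₁}(v c)` on `B` through the pairing. -/
lemma fourier {v c : R} (hv : v ∈ T.B) (hc : c ∈ T.B) :
    algebraMap k R (T.F (((T.lam ^ 3)⁻¹ • T.EM1 (v * T.e₁ * T.e₂)) * T.e₂ * T.e₁ * c)) =
      T.EM1 (v * c) := by
  set aa := (T.lam ^ 3)⁻¹ • T.EM1 (v * T.e₁ * T.e₂) with haa
  have hNCve : ∀ n ∈ T.N, (v * T.e₁ * T.e₂) * n = n * (v * T.e₁ * T.e₂) :=
    T.NC_mul (T.NC_mul (T.BNcomm hv) T.he₁N) T.e₂N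
  have hNCaa : ∀ n ∈ T.N, aa * n = n * aa := T.NC_smul _ (T.EM1_NC hNCve)
  have hNC : ∀ n ∈ T.N, (aa * T.e₂ * T.e₁ * c) * n = n * (aa * T.e₂ * T.e₁ * c) :=
    T.NC_mul (T.NC_mul (T.NC_mul hNCaa T.e₂N) T.he₁N) (T.BNcomm hc)
  rw [T.hF _ hNC]
  have haaM₁ : aa ∈ T.M₁ := Subalgebra.smul_mem _ (T.hEM1_mem _) _
  have h1 : T.EM1 (aa * T.e₂ * T.e₁ * c) = aa * T.EM1 (T.e₂ * T.e₁ * c) := by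
    rw [show aa * T.e₂ * T.e₁ * c = aa * (T.e₂ * T.e₁ * c) by simp only [mul_assoc]]
    exact T.EM1_left aa haaM₁ _
  have hsc : (T.lam ^ 3)⁻¹ * T.lam ^ 2 = T.lam⁻¹ := by
    rw [pow_succ, mul_inv_rev, mul_assoc, inv_mul_cancel₀ (pow_ne_zero 2 T.hlam), mul_one]
  have h2 : aa * T.EM1 (T.e₂ * T.e₁ * c) = T.lam⁻¹ • T.EM1 (v * T.e₁ * c) := by
    rw [haa, smul_mul_assoc, T.L1', ← smul_assoc, smul_eq_mul, hsc]
  rw [h1, h2, map_smul, T.L2 hv hc, ← smul_assoc, smul_eq_mul,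
    inv_mul_cancel₀ T.hlam, one_smul]

end JonesTower
namespace JonesTower

variable {k : Type*} [Field k] {R : Type*} [Ring R] [Algebra k R] (T : JonesTower k R)

lemma nine (v c : R) : T.EM1 (v * T.e₁ * c) =
    T.lam • (((T.lam ^ 3)⁻¹ • T.EM1 (v * T.e₁ * T.e₂)) * T.EM1 (T.e₂ * T.e₁ * c)) := by
  have hsc : (T.lam ^ 3)⁻¹ * T.lam ^ 2 = T.lam⁻¹ := by
    rw [pow_succ, mul_inv_rev, mul_assoc, inv_mul_cancel₀ (pow_ne_zero 2 T.hlam), mul_one]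
  rw [smul_mul_assoc, T.L1', smul_smul, smul_smul]
  have h1 : T.lam * (T.lam ^ 3)⁻¹ * T.lam ^ 2 = 1 := by
    rw [mul_assoc, hsc, mul_inv_cancel₀ T.hlam]
  rw [h1, one_smul]

end JonesTower
/-- **Exchange relation.** If `b ∈ B` and `∑ᵢ b₁⁽ⁱ⁾ ⊗ b₂⁽ⁱ⁾` represents the
comultiplication `Δ(b)` determined by the pairing `⟨a, b⟩ = λ⁻² F(a e₂ e₁ b)`
(i.e. `∑ᵢ F(a e₂ e₁ b₁⁽ⁱ⁾) F(a' e₂ e₁ b₂⁽ⁱ⁾) = λ² F(a a' e₂ e₁ b)` for all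
`a, a' ∈ A`), then `y b = λ⁻¹ ∑ᵢ b₂⁽ⁱ⁾ E_{M₁}(e₂ y b₁⁽ⁱ⁾)` for every `y ∈ M₁`. -/
theorem exchange_relation (T : JonesTower k R) [Nontrivial R]
    (b : R) (hb : b ∈ T.B) (m : ℕ) (b₁ b₂ : Fin m → R)
    (hb₁ : ∀ i, b₁ i ∈ T.B) (hb₂ : ∀ i, b₂ i ∈ T.B)
    (hΔ : ∀ a ∈ T.A, ∀ a' ∈ T.A,
      ∑ i, T.F (a * T.e₂ * T.e₁ * b₁ i) * T.F (a' * T.e₂ * T.e₁ * b₂ i) =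
        T.lam ^ 2 * T.F (a * a' * T.e₂ * T.e₁ * b)) :
    ∀ y ∈ T.M₁, y * b = T.lam⁻¹ • ∑ i, b₂ i * T.EM1 (T.e₂ * y * b₁ i) := by
  classical
  set φ : Fin m → R := fun i => T.EM1 (T.e₂ * T.e₁ * b₁ i) with hφ
  have hφi : ∀ i, T.EM1 (T.e₂ * T.e₁ * b₁ i) = φ i := fun i => rfl
  have hφM₁ : ∀ i, φ i ∈ T.M₁ := fun i => T.hEM1_mem _
  -- the core case `y = e₁`
  have core : T.e₁ * b = T.lam⁻¹ • ∑ i, b₂ i * φ i := by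
    set X : R := ∑ i, b₂ i * φ i with hX
    set X' : R := T.lam • (T.e₁ * b) with hX'
    have keyq : ∀ q, T.EM1 (T.vb q * X) = T.EM1 (T.vb q * X') := by
      intro q
      have hvB : T.vb q ∈ T.B := T.mem_B_of_comm (T.hvbM q)
      have hvb₂B : ∀ i, T.vb q * b₂ i ∈ T.B := fun i => mul_mem hvB (hb₂ i)
      choose μ hμ using fun i => T.EM1_scalar (hvb₂B i)
      set aq : R := (T.lam ^ 3)⁻¹ • T.EM1 (T.vb q * T.e₁ * T.e₂) with haq
      have hNCvee : ∀ n ∈ T.N, (T.vb q * T.e₁ * T.e₂) * n = n * (T.vb q * T.e₁ * T.e₂) :=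
        T.NC_mul (T.NC_mul (T.BNcomm hvB) T.he₁N) T.e₂N
      have hNCaq : ∀ n ∈ T.N, aq * n = n * aq := T.NC_smul _ (T.EM1_NC hNCvee)
      have haqM₁ : aq ∈ T.M₁ := Subalgebra.smul_mem _ (T.hEM1_mem _) _
      have haqA : aq ∈ T.A := T.mem_A haqM₁ hNCaq
      have hμF : ∀ i, T.F (aq * T.e₂ * T.e₁ * b₂ i) = μ i := by
        intro i
        have h1 := T.fourier hvB (hb₂ i)
        rw [← haq] at h1
        rw [hμ i] at h1
        have h2 : (μ i) • (1 : R) = algebraMap k R (μ i) :=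
          (Algebra.algebraMap_eq_smul_one _).symm
        rw [h2] at h1
        exact (algebraMap k R).injective h1
      have hL : T.EM1 (T.vb q * X) = ∑ i, μ i • φ i := by
        rw [hX, Finset.mul_sum, map_sum]
        refine Finset.sum_congr rfl fun i _ => ?_
        rw [← mul_assoc, T.EM1_right _ _ (hφM₁ i), hμ i, smul_mul_assoc, one_mul]
      have hR : T.EM1 (T.vb q * X') = T.lam • T.EM1 (T.vb q * T.e₁ * b) := by
        rw [hX', mul_smul_comm, map_smul]
        congr 2
        rw [mul_assoc]
      set t : R := ∑ i, μ i • φ i with hts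
      set t' : R := T.lam • T.EM1 (T.vb q * T.e₁ * b) with hts'
      have htM₁ : t ∈ T.M₁ :=
        Subalgebra.sum_mem _ fun i _ => Subalgebra.smul_mem _ (hφM₁ i) _
      have ht'M₁ : t' ∈ T.M₁ := Subalgebra.smul_mem _ (T.hEM1_mem _) _
      have coeffs : ∀ j, T.EM (T.wb j * t) = T.EM (T.wb j * t') := by
        intro j
        have hwA : T.wb j ∈ T.A := T.mem_A (T.hwbM₁ j) (T.hwbN j)
        have hLj : T.EM (T.wb j * t) =
            algebraMap k R (∑ i, T.F (T.wb j * T.e₂ * T.e₁ * b₁ i) *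
              T.F (aq * T.e₂ * T.e₁ * b₂ i)) := by
          rw [hts, Finset.mul_sum, map_sum, map_sum]
          refine Finset.sum_congr rfl fun i _ => ?_
          have hNCw : ∀ n ∈ T.N, (T.wb j * T.e₂ * T.e₁ * b₁ i) * n
              = n * (T.wb j * T.e₂ * T.e₁ * b₁ i) :=
            T.NC_mul (T.NC_mul (T.NC_mul (T.hwbN j) T.e₂N) T.he₁N) (T.BNcomm (hb₁ i))
          have h1 : T.EM (T.wb j * φ i) = algebraMap k R (T.F (T.wb j * T.e₂ * T.e₁ * b₁ i)) := by
            rw [T.hF _ hNCw]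
            congr 1
            rw [show T.wb j * T.e₂ * T.e₁ * b₁ i = T.wb j * (T.e₂ * T.e₁ * b₁ i) by
              simp only [mul_assoc]]
            rw [T.EM1_left _ (T.hwbM₁ j), hφi i]
          rw [mul_smul_comm, map_smul, h1, ← hμF i, Algebra.smul_def, ← map_mul]
          exact congrArg _ (mul_comm _ _)
        have hRj : T.EM (T.wb j * t') =
            algebraMap k R (T.lam ^ 2 * T.F (T.wb j * aq * T.e₂ * T.e₁ * b)) := by
          have hNC : ∀ n ∈ T.N, (T.wb j * aq * T.e₂ * T.e₁ * b) * n
              = n * (T.wb j * aq * T.e₂ * T.e₁ * b) :=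
            T.NC_mul (T.NC_mul (T.NC_mul (T.NC_mul (T.hwbN j) hNCaq) T.e₂N) T.he₁N)
              (T.BNcomm hb)
          have h2 : T.EM (T.wb j * (aq * T.EM1 (T.e₂ * T.e₁ * b)))
              = algebraMap k R (T.F (T.wb j * aq * T.e₂ * T.e₁ * b)) := by
            rw [T.hF _ hNC]
            congr 1
            rw [show T.wb j * aq * T.e₂ * T.e₁ * b = (T.wb j * aq) * (T.e₂ * T.e₁ * b) by
              simp only [mul_assoc], T.EM1_left _ (mul_mem (T.hwbM₁ j) haqM₁)]
            simp only [mul_assoc]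
          rw [hts', mul_smul_comm, map_smul, T.nine (T.vb q) b, ← haq,
            mul_smul_comm, map_smul, smul_smul, h2, Algebra.smul_def, ← map_mul]
          congr 1
          rw [pow_two]
        rw [hLj, hRj, hΔ (T.wb j) hwA aq haqA]
      calc T.EM1 (T.vb q * X) = t := hL
        _ = ∑ j, T.zb j * T.EM (T.wb j * t) := (T.hzw_dual₂ t htM₁).symm
        _ = ∑ j, T.zb j * T.EM (T.wb j * t') := by
            exact Finset.sum_congr rfl fun j _ => by rw [coeffs j]
        _ = t' := T.hzw_dual₂ t' ht'M₁
        _ = T.EM1 (T.vb q * X') := hR.symm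
    have hXX' : X = X' := by
      calc X = ∑ q, T.ub q * T.EM1 (T.vb q * X) := (T.huv_dual₂ X).symm
        _ = ∑ q, T.ub q * T.EM1 (T.vb q * X') := by
            exact Finset.sum_congr rfl fun q _ => by rw [keyq q]
        _ = X' := T.huv_dual₂ X'
    rw [hXX', hX', ← smul_assoc, smul_eq_mul, inv_mul_cancel₀ T.hlam, one_smul]
  -- extend from `e₁` to all of `M₁` by the `M`-bimodule property
  intro y hy
  have hy' : y ∈ Submodule.span k {x : R | ∃ m' ∈ T.M, ∃ m'' ∈ T.M, x = m' * T.e₁ * m''} := by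
    rw [← T.hspanM₁]; exact hy
  clear hy
  induction hy' using Submodule.span_induction with
  | mem x hx =>
    obtain ⟨c, hc, c', hc', rfl⟩ := hx
    have hstep : ∀ i, b₂ i * T.EM1 (T.e₂ * (c * T.e₁ * c') * b₁ i)
        = c * (b₂ i * φ i) * c' := by
      intro i
      have h1 : T.e₂ * (c * T.e₁ * c') * b₁ i = c * (T.e₂ * T.e₁ * b₁ i) * c' := by
        rw [show T.e₂ * (c * T.e₁ * c') * b₁ i = (T.e₂ * c) * T.e₁ * (c' * b₁ i) by
          simp only [mul_assoc], T.he₂M c hc, ← T.Bcomm (hb₁ i) c' hc']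
        simp only [mul_assoc]
      rw [h1, T.hEM1_bimod c (T.hMM₁ hc) c' (T.hMM₁ hc') _, hφi i]
      rw [show b₂ i * (c * φ i * c') = (b₂ i * c) * (φ i * c') by simp only [mul_assoc],
        T.Bcomm (hb₂ i) c hc]
      simp only [mul_assoc]
    rw [Finset.sum_congr rfl fun i _ => hstep i,
      show ∑ i, c * (b₂ i * φ i) * c' = c * (∑ i, b₂ i * φ i) * c' by
        rw [Finset.mul_sum, Finset.sum_mul],
      ← smul_mul_assoc, ← mul_smul_comm, ← core,
      show c * T.e₁ * c' * b = c * (T.e₁ * b) * c' by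
        rw [mul_assoc (c * T.e₁) c' b, ← T.Bcomm hb c' hc']
        simp only [mul_assoc]]
  | zero => simp
  | add x y hx hy ihx ihy =>
    simp only [mul_add, add_mul, map_add, Finset.sum_add_distrib, smul_add]
    rw [ihx, ihy]
  | smul a x hx ih =>
    have hstep : ∀ i, b₂ i * T.EM1 (T.e₂ * (a • x) * b₁ i)
        = a • (b₂ i * T.EM1 (T.e₂ * x * b₁ i)) := by
      intro i
      rw [mul_smul_comm, smul_mul_assoc, map_smul, mul_smul_comm]
    rw [smul_mul_assoc, ih, Finset.sum_congr rfl fun i _ => hstep i, ← Finset.smul_sum,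
      smul_comm]
end

section
/- In the depth-2 Jones tower setup, M is exactly the set of invariants of the Ocneanu–Szymański action of B on M₁: {x ∈ M₁ : E_{M₁}(b x e₂) = F(b e₂)·x for all b ∈ B} = M. (Here b ⊳ x := λ⁻¹E_{M₁}(bxe₂) is the action and ε(b) = λ⁻¹F(be₂) the counit, so the condition reads b ⊳ x = ε(b)x for all b ∈ B.) -/
open scoped TensorProduct

variable {k : Type*} [Field k] {R : Type*} [Ring R] [Algebra k R]

/-- `M` is exactly the set of invariants of the Ocneanu–Szymański action
`b ⊳ x = λ⁻¹ E_{M₁}(b x e₂)` of `B` on `M₁`: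
`{x ∈ M₁ : E_{M₁}(b x e₂) = F(b e₂) x for all b ∈ B} = M`. -/
theorem invariants_of_OS_action (T : JonesTower k R) [Nontrivial R] :
    {x : R | x ∈ T.M₁ ∧ ∀ b ∈ T.B, T.EM1 (b * x * T.e₂) = T.F (b * T.e₂) • x} =
      (T.M : Set R) := by
  have hinj : Function.Injective (algebraMap k R) := (algebraMap k R).injective
  have he₂sq : T.e₂ * T.e₂ = T.e₂ := by
    have := T.he₂we₂ 1 (one_mem _)
    simpa [T.hEM_one] using this
  have he₂B : T.e₂ ∈ T.B := by
    rw [JonesTower.B, Subalgebra.mem_centralizer_iff]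
    intro m hm
    exact (T.he₂M m hm).symm
  ext x
  simp only [Set.mem_setOf_eq, SetLike.mem_coe]
  constructor
  · rintro ⟨hx₁, h⟩
    have key := h T.e₂ he₂B
    have hEMx : T.EM x ∈ T.M := T.hEM_mem x hx₁
    have lhs : T.EM1 (T.e₂ * x * T.e₂) = T.lam • T.EM x := by
      rw [T.he₂we₂ x hx₁]
      have := T.hEM1_bimod (T.EM x) (T.hMM₁ hEMx) 1 (one_mem _) T.e₂
      rw [mul_one] at this
      rw [this, T.hEM1e₂]
      simp [mul_smul_comm, smul_smul]
    have hFe₂ : T.F T.e₂ = T.lam := by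
      apply hinj
      have hcomm : ∀ n ∈ T.N, T.e₂ * n = n * T.e₂ := fun n hn =>
        T.he₂M n (T.hNM hn)
      rw [T.hF T.e₂ hcomm, T.hEM1e₂, map_smul, T.hEM_one, Algebra.algebraMap_eq_smul_one]
    rw [lhs, he₂sq, hFe₂] at key
    have : T.EM x = x := smul_right_injective R T.hlam key
    rw [← this]; exact hEMx
  · intro hx
    refine ⟨T.hMM₁ hx, fun b hb => ?_⟩
    rw [JonesTower.B, Subalgebra.mem_centralizer_iff] at hb
    have hbx : b * x = x * b := (hb x hx).symm
    have hbe₂N : ∀ n ∈ T.N, b * T.e₂ * n = n * (b * T.e₂) := by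
      intro n hn
      rw [mul_assoc, T.he₂M n (T.hNM hn), ← mul_assoc, ← hb n (T.hNM hn), mul_assoc]
    -- EM1 (b * e₂) commutes with M, hence is a scalar
    have hcomm : ∀ m ∈ T.M, T.EM1 (b * T.e₂) * m = m * T.EM1 (b * T.e₂) := by
      intro m hm
      have h1 : T.EM1 (1 * (b * T.e₂) * m) = 1 * T.EM1 (b * T.e₂) * m :=
        T.hEM1_bimod 1 (one_mem _) m (T.hMM₁ hm) _
      have h2 : T.EM1 (m * (b * T.e₂) * 1) = m * T.EM1 (b * T.e₂) * 1 :=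
        T.hEM1_bimod m (T.hMM₁ hm) 1 (one_mem _) _
      have harg : b * T.e₂ * m = m * (b * T.e₂) := by
        rw [mul_assoc, T.he₂M m hm, ← mul_assoc, ← hb m hm, mul_assoc]
      simp only [one_mul, mul_one] at h1 h2
      rw [← h1, harg, h2]
    obtain ⟨μ, hμ⟩ := T.hCM₁M (T.EM1 (b * T.e₂)) (T.hEM1_mem _) hcomm
    have hμF : μ = T.F (b * T.e₂) := by
      apply hinj
      rw [T.hF (b * T.e₂) hbe₂N, hμ, map_smul, T.hEM_one, Algebra.algebraMap_eq_smul_one]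
    have : b * x * T.e₂ = x * (b * T.e₂) * 1 := by
      rw [mul_one, ← mul_assoc, hbx]
    rw [this, T.hEM1_bimod x (T.hMM₁ hx) 1 (one_mem _), hμ, mul_one, ← hμF,
      mul_smul_comm, mul_one]
end
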